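/- Under the constraints x ≤ y ≤ z, xyz = α, x + y + z = β (α, β > 0, β³ > 27α), if r > 1 then the function h(x,y,z) = x^r + y^r + z^r attains its maximum when x = y < z and its minimum when x < y = z. -/

import Mathlib

open Set

noncomputable def Dd (a b x : ℝ) : ℝ := (b - x)^2 - 4*a/x
noncomputable def Yf (a b x : ℝ) : ℝ := ((b - x) - Real.sqrt (Dd a b x))/2
noncomputable def Zf (a b x : ℝ) : ℝ := ((b - x) + Real.sqrt (Dd a b x))/2
noncomputable def gf (a b r x : ℝ) : ℝ := x ^ r + Yf a b x ^ r + Zf a b x ^ r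

lemma feas_char {a b x y z : ℝ} (hx : 0 < x) (hyz : y ≤ z)
    (hprod : x*y*z = a) (hsum : x+y+z = b) : Yf a b x = y ∧ Zf a b x = z := by
  have hyz' : y + z = b - x := by linarith
  have hp : y*z = a/x := by rw [eq_div_iff hx.ne']; linear_combination hprod
  have h1 : Dd a b x = (z-y)^2 := by
    unfold Dd; rw [← hyz', mul_div_assoc, ← hp]; ring
  have h2 : Real.sqrt (Dd a b x) = z - y := by
    rw [h1, Real.sqrt_sq (by linarith)]
  constructor
  · unfold Yf; rw [h2, ← hyz']; ring
  · unfold Zf; rw [h2, ← hyz']; ring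

lemma phi_mono (b : ℝ) : StrictMonoOn (fun x : ℝ => x^2*(b-2*x)) (Icc 0 (b/3)) := by
  apply strictMonoOn_of_deriv_pos (convex_Icc _ _)
  · fun_prop
  · intro x hx
    rw [interior_Icc, mem_Ioo] at hx
    have hd : HasDerivAt (fun x : ℝ => x^2*(b-2*x)) (2*x*(b-3*x)) x := by
      have h1 := (hasDerivAt_pow 2 x).fun_mul (((hasDerivAt_id x).const_mul 2).const_sub b)
      refine h1.congr_deriv ?_
      simp only [id_eq]
      push_cast
      ring
    rw [hd.deriv]
    nlinarith [hx.1, hx.2]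

lemma delta_mono (b : ℝ) : StrictMonoOn (fun x : ℝ => x*(b-x)^2) (Icc 0 (b/3)) := by
  apply strictMonoOn_of_deriv_pos (convex_Icc _ _)
  · fun_prop
  · intro x hx
    rw [interior_Icc, mem_Ioo] at hx
    have hd : HasDerivAt (fun x : ℝ => x*(b-x)^2) ((b-x)*(b-3*x)) x := by
      have h1 := (hasDerivAt_id x).fun_mul (((hasDerivAt_id x).const_sub b).fun_pow 2)
      refine h1.congr_deriv ?_
      simp only [id_eq]
      push_cast
      ring
    rw [hd.deriv]
    nlinarith [hx.1, hx.2]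

lemma lt_Yf {a b x : ℝ} (hx : 0 < x) (hxb : 3*x < b) (hphi : x^2*(b-2*x) < a) :
    x < Yf a b x := by
  have h1 : (b-x)^2 - (b-3*x)^2 < 4*a/x := by
    rw [lt_div_iff₀ hx]; nlinarith
  have h2 : Dd a b x < (b-3*x)^2 := by unfold Dd; linarith
  have h3 : Real.sqrt (Dd a b x) < b - 3*x := (Real.sqrt_lt' (by linarith)).2 h2
  unfold Yf; linarith

set_option maxHeartbeats 1000000 in
lemma gf_deriv {a b r x : ℝ} (hr : 1 < r) (hx : 0 < x)
    (hD : 0 < Dd a b x) (hxy : x < Yf a b x) :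
    ∃ G, HasDerivAt (gf a b r) G x ∧ 0 ≤ G := by
  set s := Real.sqrt (Dd a b x) with hs_def
  set y := Yf a b x with hy_def
  set z := Zf a b x with hz_def
  have hs : 0 < s := Real.sqrt_pos.2 hD
  have hs2 : s^2 = Dd a b x := Real.sq_sqrt hD.le
  have hyz_sum : y + z = b - x := by rw [hy_def, hz_def]; unfold Yf Zf; ring
  have hzy : z - y = s := by rw [hy_def, hz_def]; unfold Yf Zf; ring
  have hyzp : y * z = a / x := by
    have h0 : y * z = ((b-x)^2 - s^2)/4 := by rw [hy_def, hz_def]; unfold Yf Zf; ring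
    rw [h0, hs2]; unfold Dd; ring
  have hy0 : 0 < y := lt_trans hx hxy
  have hylz : y < z := by linarith
  have hz0 : 0 < z := by linarith
  have hzx : x < z := by linarith
  have ha_eq : a = x*(y*z) := by
    field_simp at hyzp; linarith [hyzp]
  have hb_eq : b = x + y + z := by linarith
  have hD' : HasDerivAt (Dd a b) (2*(b-x)^1*(-1) - 4*a*(-(x^2)⁻¹)) x := by
    have h1 : HasDerivAt (fun t : ℝ => (b-t)^2) (2*(b-x)^1*(-1)) x := by
      have := ((hasDerivAt_id x).const_sub b).fun_pow 2
      exact this.congr_deriv (by simp)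
    have h2 : HasDerivAt (fun t : ℝ => 4*a/t) (4*a*(-(x^2)⁻¹)) x := by
      have := (hasDerivAt_inv hx.ne').const_mul (4*a)
      simpa only [div_eq_mul_inv] using this
    exact h1.sub h2
  set Dv : ℝ := 2*(b-x)^1*(-1) - 4*a*(-(x^2)⁻¹) with hDv
  have hsd : HasDerivAt (fun t => Real.sqrt (Dd a b t)) (Dv/(2*s)) x := hD'.sqrt hD.ne'
  have hYd : HasDerivAt (Yf a b) (((-1) - Dv/(2*s))/2) x := by
    have h3 : HasDerivAt (fun t : ℝ => b - t) (-1) x := by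
      simpa using (hasDerivAt_id x).const_sub b
    exact (h3.sub hsd).div_const 2
  have hZd : HasDerivAt (Zf a b) (((-1) + Dv/(2*s))/2) x := by
    have h3 : HasDerivAt (fun t : ℝ => b - t) (-1) x := by
      simpa using (hasDerivAt_id x).const_sub b
    exact (h3.add hsd).div_const 2
  have hxr : HasDerivAt (fun t : ℝ => t ^ r) (r * x ^ (r-1)) x :=
    Real.hasDerivAt_rpow_const (Or.inl hx.ne')
  have hyr : HasDerivAt (fun t => Yf a b t ^ r) ((((-1) - Dv/(2*s))/2) * r * y^(r-1)) x :=
    hYd.rpow_const (Or.inl hy0.ne')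
  have hzr : HasDerivAt (fun t => Zf a b t ^ r) ((((-1) + Dv/(2*s))/2) * r * z^(r-1)) x :=
    hZd.rpow_const (Or.inl hz0.ne')
  have hgd : HasDerivAt (gf a b r) (r * x ^ (r-1) + (((-1) - Dv/(2*s))/2) * r * y^(r-1)
      + (((-1) + Dv/(2*s))/2) * r * z^(r-1)) x := (hxr.add hyr).add hzr
  set G : ℝ := r * x ^ (r-1) + (((-1) - Dv/(2*s))/2) * r * y^(r-1)
      + (((-1) + Dv/(2*s))/2) * r * z^(r-1) with hG
  refine ⟨G, hgd, ?_⟩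
  set X := x ^ (r-1) with hX
  set Yp := y ^ (r-1) with hYp
  set Zp := z ^ (r-1) with hZp
  have hxrr : x ^ r = X * x := by rw [hX, ← Real.rpow_add_one hx.ne']; ring_nf
  have hyrr : y ^ r = Yp * y := by rw [hYp, ← Real.rpow_add_one hy0.ne']; ring_nf
  have hzrr : z ^ r = Zp * z := by rw [hZp, ← Real.rpow_add_one hz0.ne']; ring_nf
  have hzx' : (z:ℝ) - x ≠ 0 := by linarith
  have hzy' : (z:ℝ) - y ≠ 0 := by linarith
  have hconv : y ^ r ≤ (z-y)/(z-x) * x^r + (y-x)/(z-x) * z^r := by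
    have hc := (convexOn_rpow hr.le).2 (mem_Ici.2 hx.le) (mem_Ici.2 hz0.le)
      (div_nonneg (by linarith) (by linarith) : (0:ℝ) ≤ (z-y)/(z-x))
      (div_nonneg (by linarith) (by linarith) : (0:ℝ) ≤ (y-x)/(z-x))
      (by rw [← add_div, show z-y+(y-x) = z-x by ring]; exact div_self hzx')
    have hcomb : ((z-y)/(z-x)) • x + ((y-x)/(z-x)) • z = y := by
      rw [smul_eq_mul, smul_eq_mul]; field_simp; ring
    rw [hcomb] at hc
    simpa [smul_eq_mul] using hc
  have hE : 0 ≤ x^r*(z-y) + y^r*(x-z) + z^r*(y-x) := by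
    have h4 : (z-x) * (y^r) ≤ (z-x) * ((z-y)/(z-x) * x^r + (y-x)/(z-x) * z^r) :=
      mul_le_mul_of_nonneg_left hconv (by linarith)
    have h5 : (z-x) * ((z-y)/(z-x) * x^r + (y-x)/(z-x) * z^r)
        = (z-y)*x^r + (y-x)*z^r := by
      field_simp
    rw [h5] at h4; nlinarith [h4]
  rw [hxrr, hyrr, hzrr] at hE
  clear_value s y z Dv G X Yp Zp
  clear hgd hxr hyr hzr hYd hZd hsd hD' hD hs_def hy_def hz_def hxy hs2 hyzp
  have key : G * (x * s) = r * ((X*x)*(z-y) + (Yp*y)*(x-z) + (Zp*z)*(y-x)) := by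
    rw [hG, hDv, ← hzy, hb_eq, ha_eq]
    field_simp
    ring
  by_contra hGneg
  push_neg at hGneg
  have h6 : G * (x*s) < 0 := mul_neg_of_neg_of_pos hGneg (by positivity)
  rw [key] at h6
  nlinarith [hE, hr]

theorem stmt_5 (a b r : ℝ) (ha : 0 < a) (hb : 0 < b) (hab : b ^ 3 > 27 * a) (hr : 1 < r) :
    ∃ pmax ∈ {p : ℝ × ℝ × ℝ | 0 < p.1 ∧ p.1 ≤ p.2.1 ∧ p.2.1 ≤ p.2.2 ∧
        p.1 * p.2.1 * p.2.2 = a ∧ p.1 + p.2.1 + p.2.2 = b},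
    ∃ pmin ∈ {p : ℝ × ℝ × ℝ | 0 < p.1 ∧ p.1 ≤ p.2.1 ∧ p.2.1 ≤ p.2.2 ∧
        p.1 * p.2.1 * p.2.2 = a ∧ p.1 + p.2.1 + p.2.2 = b},
      (pmax.1 = pmax.2.1 ∧ pmax.2.1 < pmax.2.2) ∧
      (pmin.1 < pmin.2.1 ∧ pmin.2.1 = pmin.2.2) ∧
      ∀ q ∈ {p : ℝ × ℝ × ℝ | 0 < p.1 ∧ p.1 ≤ p.2.1 ∧ p.2.1 ≤ p.2.2 ∧
          p.1 * p.2.1 * p.2.2 = a ∧ p.1 + p.2.1 + p.2.2 = b},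
        q.1 ^ r + q.2.1 ^ r + q.2.2 ^ r ≤ pmax.1 ^ r + pmax.2.1 ^ r + pmax.2.2 ^ r ∧
        pmin.1 ^ r + pmin.2.1 ^ r + pmin.2.2 ^ r ≤ q.1 ^ r + q.2.1 ^ r + q.2.2 ^ r := by
  have hb3 : (0:ℝ) < b/3 := by linarith
  -- x₂ : root of x^2 (b - 2x) = a in (0, b/3)
  obtain ⟨x₂, hx₂I, hx₂v⟩ : ∃ x ∈ Ioo 0 (b/3), x^2*(b-2*x) = a := by
    have hc : ContinuousOn (fun x : ℝ => x^2*(b-2*x)) (Icc 0 (b/3)) := by fun_prop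
    have hmem : a ∈ Icc ((fun x : ℝ => x^2*(b-2*x)) 0) ((fun x : ℝ => x^2*(b-2*x)) (b/3)) := by
      constructor
      · simp; linarith
      · simp only
        nlinarith
    obtain ⟨x, hxI, hxv⟩ := intermediate_value_Icc hb3.le hc hmem
    refine ⟨x, ⟨lt_of_le_of_ne hxI.1 ?_, lt_of_le_of_ne hxI.2 ?_⟩, hxv⟩
    · rintro rfl; simp at hxv; nlinarith
    · rintro rfl; nlinarith
  -- x₁ : root of x (b-x)^2 = 4a in (0, b/3)
  obtain ⟨x₁, hx₁I, hx₁v⟩ : ∃ x ∈ Ioo 0 (b/3), x*(b-x)^2 = 4*a := by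
    have hc : ContinuousOn (fun x : ℝ => x*(b-x)^2) (Icc 0 (b/3)) := by fun_prop
    have hmem : 4*a ∈ Icc ((fun x : ℝ => x*(b-x)^2) 0) ((fun x : ℝ => x*(b-x)^2) (b/3)) := by
      constructor
      · simp; linarith
      · simp only
        nlinarith
    obtain ⟨x, hxI, hxv⟩ := intermediate_value_Icc hb3.le hc hmem
    refine ⟨x, ⟨lt_of_le_of_ne hxI.1 ?_, lt_of_le_of_ne hxI.2 ?_⟩, hxv⟩
    · rintro rfl; simp at hxv; nlinarith
    · rintro rfl; nlinarith
  set s₁ : ℝ := (b - x₁)/2 with hs₁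
  have hx1s : x₁ < s₁ := by rw [hs₁]; rcases hx₁I with ⟨h1, h2⟩; linarith
  have hprod1 : x₁ * s₁ * s₁ = a := by rw [hs₁]; nlinarith [hx₁v]
  have hsum1 : x₁ + s₁ + s₁ = b := by rw [hs₁]; ring
  have hprod2 : x₂ * x₂ * (b - 2*x₂) = a := by nlinarith [hx₂v]
  have hsum2 : x₂ + x₂ + (b - 2*x₂) = b := by ring
  have hx2lt : x₂ < b - 2*x₂ := by rcases hx₂I with ⟨h1, h2⟩; linarith
  -- bounds for any feasible point
  have hbounds : ∀ x y z : ℝ, 0 < x → x ≤ y → y ≤ z → x*y*z = a → x+y+z = b →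
      x₁ ≤ x ∧ x ≤ x₂ := by
    intro x y z h0 hxy hyz hp hsum
    have hxz : x ≤ z := hxy.trans hyz
    have hx3 : 3*x ≤ b := by linarith
    have hxmem : x ∈ Icc (0:ℝ) (b/3) := ⟨h0.le, by linarith⟩
    constructor
    · by_contra hcon
      push_neg at hcon
      have hlt := delta_mono b hxmem ⟨hx₁I.1.le, hx₁I.2.le⟩ hcon
      simp only at hlt
      rw [hx₁v] at hlt
      have hbx : b - x = y + z := by linarith
      rw [hbx] at hlt
      nlinarith [mul_nonneg h0.le (sq_nonneg (z - y)), hp]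
    · by_contra hcon
      push_neg at hcon
      have hlt := phi_mono b ⟨hx₂I.1.le, hx₂I.2.le⟩ hxmem hcon
      simp only at hlt
      rw [hx₂v] at hlt
      nlinarith [mul_nonneg (mul_nonneg h0.le (sub_nonneg.2 hxy)) (sub_nonneg.2 hxz)]
  have hx12 : x₁ ≤ x₂ := (hbounds x₁ s₁ s₁ hx₁I.1 hx1s.le le_rfl hprod1 hsum1).2
  -- monotonicity of gf on [x₁, x₂]
  have hinterior : ∀ x ∈ Ioo x₁ x₂, ∃ G, HasDerivAt (gf a b r) G x ∧ 0 ≤ G := by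
    intro x hx
    have hx0 : 0 < x := hx₁I.1.trans hx.1
    have hxb3 : x < b/3 := hx.2.trans hx₂I.2
    have hdm := delta_mono b ⟨hx₁I.1.le, hx₁I.2.le⟩ ⟨hx0.le, hxb3.le⟩ hx.1
    simp only at hdm
    rw [hx₁v] at hdm
    have hD : 0 < Dd a b x := by
      unfold Dd
      have : 4*a/x < (b-x)^2 := by rw [div_lt_iff₀ hx0]; nlinarith
      linarith
    have hpm := phi_mono b ⟨hx0.le, hxb3.le⟩ ⟨hx₂I.1.le, hx₂I.2.le⟩ hx.2
    simp only at hpm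
    rw [hx₂v] at hpm
    exact gf_deriv hr hx0 hD (lt_Yf hx0 (by linarith) hpm)
  have hmono : MonotoneOn (gf a b r) (Icc x₁ x₂) := by
    apply monotoneOn_of_deriv_nonneg (convex_Icc _ _)
    · -- continuity
      have hne : ∀ x ∈ Icc x₁ x₂, x ≠ 0 := fun x hx => (hx₁I.1.trans_le hx.1).ne'
      have hDc : ContinuousOn (fun x => Dd a b x) (Icc x₁ x₂) := by
        unfold Dd
        exact (continuousOn_const.sub continuousOn_id).pow 2 |>.sub
          (continuousOn_const.div continuousOn_id hne)
      have hYc : ContinuousOn (Yf a b) (Icc x₁ x₂) := by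
        unfold Yf
        exact ((continuousOn_const.sub continuousOn_id).sub hDc.sqrt).div_const 2
      have hZc : ContinuousOn (Zf a b) (Icc x₁ x₂) := by
        unfold Zf
        exact ((continuousOn_const.sub continuousOn_id).add hDc.sqrt).div_const 2
      unfold gf
      have hr0 : (0:ℝ) ≤ r := by linarith
      exact ((continuousOn_id.rpow_const (fun x _ => Or.inr hr0)).add
        (hYc.rpow_const (fun x _ => Or.inr hr0))).add
        (hZc.rpow_const (fun x _ => Or.inr hr0))
    · intro x hx
      rw [interior_Icc] at hx
      obtain ⟨G, hGd, _⟩ := hinterior x hx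
      exact hGd.differentiableAt.differentiableWithinAt
    · intro x hx
      rw [interior_Icc] at hx
      obtain ⟨G, hGd, hG0⟩ := hinterior x hx
      rw [hGd.deriv]
      exact hG0
  have hfc2 := feas_char hx₂I.1 hx2lt.le hprod2 hsum2
  have hfc1 := feas_char hx₁I.1 le_rfl hprod1 hsum1
  refine ⟨(x₂, x₂, b - 2*x₂), ⟨hx₂I.1, le_rfl, hx2lt.le, hprod2, hsum2⟩,
    (x₁, s₁, s₁), ⟨hx₁I.1, hx1s.le, le_rfl, hprod1, hsum1⟩,
    ⟨rfl, hx2lt⟩, ⟨hx1s, rfl⟩, ?_⟩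
  rintro ⟨x, y, z⟩ ⟨h0, hxy, hyz, hp, hsum⟩
  obtain ⟨hge1, hle2⟩ := hbounds x y z h0 hxy hyz hp hsum
  have hfc := feas_char h0 hyz hp hsum
  have hgq : gf a b r x = x ^ r + y ^ r + z ^ r := by
    unfold gf; rw [hfc.1, hfc.2]
  have hg2 : gf a b r x₂ = x₂ ^ r + x₂ ^ r + (b - 2*x₂) ^ r := by
    unfold gf; rw [hfc2.1, hfc2.2]
  have hg1 : gf a b r x₁ = x₁ ^ r + s₁ ^ r + s₁ ^ r := by
    unfold gf; rw [hfc1.1, hfc1.2]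
  constructor
  · have := hmono ⟨hge1, hle2⟩ ⟨hx12, le_rfl⟩ hle2
    rw [hgq, hg2] at this
    simpa using this
  · have := hmono ⟨le_rfl, hx12⟩ ⟨hge1, hle2⟩ hge1
    rw [hgq, hg1] at this
    simpa using this
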